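/- Let G(n) be the graph of the StSSBM(n,k,a,b) model, fix a vertex v, an integer R ∈ ℕ+, and constants L > 0, C > 0, and let V_{2R}^n(v) denote the set of vertices at graph distance at most 2R from v in G(n). Then limsup_{n→∞} Σ_{m=1}^∞ ( 2^m L^m C^m / (m−1)! ) · E[ |V_{2R}^n(v)|^m ] < ∞. -/

import Mathlib

open MeasureTheory Finset

noncomputable section
open scoped Classical

/-- Unordered pairs of distinct vertices, represented by ordered pairs with increasing
coordinates: the potential edges of a graph on `Fin n`. -/
abbrev EdgeIdx (n : ℕ) := {p : Fin n × Fin n // p.1 < p.2}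

variable {n : ℕ}

/-- The time (in `{1, …, n}`) at which vertex `v` arrives, given the arrival
order `σ` (`σ ⟨t-1⟩` is the vertex arriving at time `t`). -/
def arrivalTime (σ : Equiv.Perm (Fin n)) (v : Fin n) : ℕ := (σ.symm v : ℕ) + 1

/-- The graph `G(t)`: the subgraph of `G(n)` (encoded by the indicator `E` of present
edges) induced by the vertices that have arrived by time `t`. -/
def graphAt (E : EdgeIdx n → Bool) (σ : Equiv.Perm (Fin n)) (t : ℕ) :
    SimpleGraph (Fin n) where
  Adj u v := u ≠ v ∧ arrivalTime σ u ≤ t ∧ arrivalTime σ v ≤ t ∧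
    ∃ p : EdgeIdx n, E p = true ∧
      ((p.1.1 = u ∧ p.1.2 = v) ∨ (p.1.1 = v ∧ p.1.2 = u))
  symm := by
    constructor
    rintro u v ⟨h1, h2, h3, p, hp, hor⟩
    exact ⟨h1.symm, h3, h2, p, hp, hor.symm⟩
  loopless := by
    constructor
    rintro v ⟨h1, -⟩
    exact h1 rfl

/-- `V_R^t(v)`: the ball of radius `R` around `v` in the graph `G(t)`. -/
def ballSet (E : EdgeIdx n → Bool) (σ : Equiv.Perm (Fin n)) (t R : ℕ) (v : Fin n) :
    Set (Fin n) :=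
  {u | (graphAt E σ t).Reachable v u ∧ (graphAt E σ t).dist v u ≤ R}

/-- `V_R^t(v)` as a finite set. -/
def ballFinset (E : EdgeIdx n → Bool) (σ : Equiv.Perm (Fin n)) (t R : ℕ) (v : Fin n) :
    Finset (Fin n) :=
  Finset.univ.filter (· ∈ ballSet E σ t R v)

/-- The accessible vertex set `𝒱_v^t` (with locality radius `R`):
`𝒱_v^0 = {v}`, and when vertex `v(t+1) = σ ⟨t⟩` arrives, every vertex in the
radius-`R` ball around `v(t+1)` in `G(t+1)` pools the accessible sets of all
vertices of that ball. -/
def accSet (E : EdgeIdx n → Bool) (σ : Equiv.Perm (Fin n)) (R : ℕ) :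
    ℕ → Fin n → Set (Fin n)
  | 0, v => {v}
  | t + 1, v =>
    if h : t < n then
      if v ∈ ballSet E σ (t + 1) R (σ ⟨t, h⟩) then
        ⋃ v' ∈ ballSet E σ (t + 1) R (σ ⟨t, h⟩), accSet E σ R t v'
      else accSet E σ R t v
    else accSet E σ R t v

/-- A full configuration of the streaming SBM with side information:
true labels, noisy labels, edge indicators, and the arrival order. -/
abbrev ConfigS (n k : ℕ) :=
  (Fin n → Fin k) × (Fin n → Fin k) × (EdgeIdx n → Bool) × Equiv.Perm (Fin n)

/-- A configuration of the streaming SBM without side information. -/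
abbrev Config (n k : ℕ) :=
  (Fin n → Fin k) × (EdgeIdx n → Bool) × Equiv.Perm (Fin n)

/-- The probability that the potential edge `p` is present, given the labels:
`a/n` within communities and `b/n` across. -/
def edgeP (k : ℕ) (a b : ℝ) (τ : Fin n → Fin k) (p : EdgeIdx n) : ℝ :=
  if τ p.1.1 = τ p.1.2 then a / n else b / n

/-- The probability mass of a configuration of `StSSBM(n,k,a,b,α)`
(with side information). -/
def densityS (k : ℕ) (a b α : ℝ) (c : ConfigS n k) : ℝ :=
  ((1 : ℝ) / (k : ℝ) ^ n) * ((1 : ℝ) / (Nat.factorial n : ℝ)) *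
    (∏ v : Fin n, if c.2.1 v = c.1 v then 1 - α else α / ((k : ℝ) - 1)) *
    (∏ p : EdgeIdx n,
      if c.2.2.1 p then edgeP k a b c.1 p else 1 - edgeP k a b c.1 p)

/-- The probability mass of a configuration of `StSSBM(n,k,a,b)`
(no side information). -/
def density (k : ℕ) (a b : ℝ) (c : Config n k) : ℝ :=
  ((1 : ℝ) / (k : ℝ) ^ n) * ((1 : ℝ) / (Nat.factorial n : ℝ)) *
    ∏ p : EdgeIdx n,
      if c.2.1 p then edgeP k a b c.1 p else 1 - edgeP k a b c.1 p

end

noncomputable section Aux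
open scoped Classical
open Finset

variable {n : ℕ}

/-- sphere of radius ℓ -/
def sph (E : EdgeIdx n → Bool) (σ : Equiv.Perm (Fin n)) (v : Fin n) (ℓ : ℕ) :
    Finset (Fin n) :=
  Finset.univ.filter fun u =>
    (graphAt E σ n).Reachable v u ∧ (graphAt E σ n).dist v u = ℓ

lemma mem_sph {E σ} {v u : Fin n} {ℓ : ℕ} :
    u ∈ sph E σ v ℓ ↔ (graphAt E σ n).Reachable v u ∧ (graphAt E σ n).dist v u = ℓ := by
  simp [sph]

lemma sph_zero (E : EdgeIdx n → Bool) (σ) (v : Fin n) : sph E σ v 0 = {v} := by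
  ext u
  simp only [mem_sph, Finset.mem_singleton]
  constructor
  · rintro ⟨hr, hd⟩
    rcases (SimpleGraph.dist_eq_zero_iff_eq_or_not_reachable).1 hd with h | h
    · exact h.symm
    · exact absurd hr h
  · rintro rfl; exact ⟨SimpleGraph.Reachable.refl _, SimpleGraph.dist_self⟩

lemma adj_edge_true {E : EdgeIdx n → Bool} {σ} {t : ℕ} {u w : Fin n}
    (h : (graphAt E σ t).Adj u w) (p : EdgeIdx n)
    (h1 : (p.1.1 = u ∧ p.1.2 = w) ∨ (p.1.1 = w ∧ p.1.2 = u)) : E p = true := by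
  obtain ⟨-, -, -, q, hq, hor⟩ := h
  have hp2 := p.2
  have hq2 := q.2
  have : p = q := by
    rcases h1 with ⟨h11, h12⟩ | ⟨h11, h12⟩ <;> rcases hor with ⟨h21, h22⟩ | ⟨h21, h22⟩ <;>
      [skip; exfalso; exfalso; skip] <;>
    first
      | (apply Subtype.ext; apply Prod.ext <;> simp_all)
      | (rw [h11, h12] at hp2; rw [h21, h22] at hq2; exact absurd hq2 (lt_asymm hp2))
  rw [this]; exact hq

lemma exists_parent {E : EdgeIdx n → Bool} {σ} {v u : Fin n} {ℓ : ℕ}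
    (hu : u ∈ sph E σ v (ℓ + 1)) :
    ∃ w, w ∈ sph E σ v ℓ ∧ (graphAt E σ n).Adj w u := by
  obtain ⟨hr, hd⟩ := mem_sph.1 hu
  obtain ⟨p, hp⟩ := hr.exists_walk_length_eq_dist
  rw [hd] at hp
  have hne : u ≠ v := by
    rintro rfl
    rw [SimpleGraph.dist_self] at hd; omega
  cases hpr : p.reverse with
  | nil =>
    exfalso
    have hl : p.length = 0 := by
      rw [← SimpleGraph.Walk.length_reverse, hpr]; rfl
    omega
  | cons hadj q =>
    rename_i w
    have hlen : q.length = ℓ := by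
      have := congrArg SimpleGraph.Walk.length hpr
      rw [SimpleGraph.Walk.length_reverse] at this
      simp [hp] at this
      omega
    have hrw : (graphAt E σ n).Reachable v w := ⟨q.reverse⟩
    refine ⟨w, mem_sph.2 ⟨hrw, ?_⟩, hadj.symm⟩
    have h1 : (graphAt E σ n).dist v w ≤ ℓ := by
      simpa [hlen] using SimpleGraph.dist_le q.reverse
    obtain ⟨pw, hpw⟩ := hrw.exists_walk_length_eq_dist
    have h2 : (graphAt E σ n).dist v u ≤ (graphAt E σ n).dist v w + 1 := by
      have := SimpleGraph.dist_le (pw.concat hadj.symm)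
      rwa [SimpleGraph.Walk.length_concat, hpw] at this
    omega

def pF (E : EdgeIdx n → Bool) (σ : Equiv.Perm (Fin n)) (v : Fin n) (ℓ : ℕ) : Fin n → Fin n :=
  fun u => if h : ∃ w, w ∈ sph E σ v ℓ ∧ (graphAt E σ n).Adj w u ∧ u ∈ sph E σ v (ℓ+1)
    then h.choose else u

lemma pF_spec {E : EdgeIdx n → Bool} {σ} {v u : Fin n} {ℓ : ℕ} (hu : u ∈ sph E σ v (ℓ+1)) :
    pF E σ v ℓ u ∈ sph E σ v ℓ ∧ (graphAt E σ n).Adj (pF E σ v ℓ u) u := by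
  obtain ⟨w, hw1, hw2⟩ := exists_parent hu
  have h : ∃ w, w ∈ sph E σ v ℓ ∧ (graphAt E σ n).Adj w u ∧ u ∈ sph E σ v (ℓ+1) :=
    ⟨w, hw1, hw2, hu⟩
  rw [pF, dif_pos h]
  exact ⟨h.choose_spec.1, h.choose_spec.2.1⟩

lemma pF_id {E : EdgeIdx n → Bool} {σ} {v u : Fin n} {ℓ : ℕ} (hu : u ∉ sph E σ v (ℓ+1)) :
    pF E σ v ℓ u = u := by
  rw [pF, dif_neg]
  rintro ⟨w, -, -, hw⟩; exact hu hw

/-- witness lists -/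
abbrev WL (n : ℕ) := List (Finset (Fin n) × (Fin n → Fin n))

def sizeL (w : WL n) : ℕ := (w.map (fun e => e.1.card)).sum

@[simp] lemma sizeL_nil : sizeL ([] : WL n) = 0 := rfl

@[simp] lemma sizeL_cons (e : Finset (Fin n) × (Fin n → Fin n)) (w : WL n) :
    sizeL (e :: w) = e.1.card + sizeL w := by simp [sizeL]

def wits : ℕ → Finset (Fin n) → Finset (WL n)
  | 0, _ => {[]}
  | q+1, A => ((Finset.univ : Finset (Finset (Fin n) × (Fin n → Fin n))).filter
      (fun Sπ => ∀ u, if u ∈ Sπ.1 then Sπ.2 u ∈ A else Sπ.2 u = u)).biUnion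
      (fun Sπ => ((wits q Sπ.1).image (List.cons Sπ)))

def tower (γ : ℝ) : ℕ → ℝ
  | 0 => 1
  | q+1 => Real.exp (γ * tower γ q)

lemma tower_nonneg (γ : ℝ) (q : ℕ) : 0 ≤ tower γ q := by
  cases q with
  | zero => norm_num [tower]
  | succ q => exact (Real.exp_pos _).le

lemma card_valid_pi (A S : Finset (Fin n)) :
    ((Finset.univ : Finset (Fin n → Fin n)).filter
      (fun π => ∀ u, if u ∈ S then π u ∈ A else π u = u)).card = A.card ^ S.card := by
  rw [← Fintype.card_subtype]
  have e : {π : Fin n → Fin n // ∀ u, if u ∈ S then π u ∈ A else π u = u} ≃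
      ((u : Fin n) → {x // x ∈ (if u ∈ S then A else {u})}) := by
    refine ⟨fun π u => ⟨π.1 u, ?_⟩, fun f => ⟨fun u => (f u).1, ?_⟩, fun π => rfl, fun f => rfl⟩
    · have := π.2 u
      split at this <;> simp_all
    · intro u
      have := (f u).2
      split at this <;> simp_all
  rw [Fintype.card_congr e, Fintype.card_pi]
  have : ∀ u : Fin n, Fintype.card {x // x ∈ (if u ∈ S then A else {u})} =
      if u ∈ S then A.card else 1 := by
    intro u
    rw [Fintype.card_coe]
    split <;> simp
  simp only [this]
  rw [Finset.prod_ite_mem, Finset.univ_inter, Finset.prod_const]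

lemma sum_wits_le (β γ : ℝ) (hβ : 0 ≤ β) (hγ : (n:ℝ) * β ≤ γ) :
    ∀ (q : ℕ) (A : Finset (Fin n)),
      ∑ w ∈ wits q A, β ^ sizeL w ≤ tower γ q ^ A.card := by
  intro q
  induction q with
  | zero => intro A; simp [wits, tower]
  | succ q ih =>
    intro A
    set T := tower γ q with hT
    have hT0 : 0 ≤ T := tower_nonneg γ q
    rw [wits]
    rw [Finset.sum_biUnion ?hdisj]
    case hdisj =>
      intro x hx y hy hxy
      simp only [Finset.disjoint_left]
      intro w hw hw'
      simp only [Finset.mem_image] at hw hw'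
      obtain ⟨w1, -, rfl⟩ := hw
      obtain ⟨w2, -, h2⟩ := hw'
      exact hxy (by injection h2.symm)
    have step1 : ∀ Sπ ∈ ((Finset.univ : Finset (Finset (Fin n) × (Fin n → Fin n))).filter
        (fun Sπ => ∀ u, if u ∈ Sπ.1 then Sπ.2 u ∈ A else Sπ.2 u = u)),
        ∑ w ∈ (wits q Sπ.1).image (List.cons Sπ), β ^ sizeL w ≤ (β * T) ^ Sπ.1.card := by
      intro Sπ _
      rw [Finset.sum_image (by intro x _ y _ h; injection h)]
      have : ∀ w' ∈ wits q Sπ.1, β ^ sizeL (Sπ :: w') = β ^ Sπ.1.card * β ^ sizeL w' := by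
        intro w' _; rw [sizeL_cons, pow_add]
      rw [Finset.sum_congr rfl this, ← Finset.mul_sum]
      calc β ^ Sπ.1.card * ∑ w' ∈ wits q Sπ.1, β ^ sizeL w'
          ≤ β ^ Sπ.1.card * T ^ Sπ.1.card := by
            apply mul_le_mul_of_nonneg_left (ih Sπ.1) (pow_nonneg hβ _)
        _ = (β * T) ^ Sπ.1.card := (mul_pow _ _ _).symm
    calc ∑ Sπ ∈ _, ∑ w ∈ (wits q Sπ.1).image (List.cons Sπ), β ^ sizeL w
        ≤ ∑ Sπ ∈ ((Finset.univ : Finset (Finset (Fin n) × (Fin n → Fin n))).filter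
            (fun Sπ => ∀ u, if u ∈ Sπ.1 then Sπ.2 u ∈ A else Sπ.2 u = u)),
            (β * T) ^ Sπ.1.card := Finset.sum_le_sum step1
      _ = ∑ S : Finset (Fin n), ((A.card : ℝ) * (β * T)) ^ S.card := by
          rw [Finset.sum_filter, Fintype.sum_prod_type]
          congr 1
          ext S
          have hred : ∀ a : Fin n → Fin n, ((S, a).1 : Finset (Fin n)) = S := fun _ => rfl
          have hred2 : ∀ a : Fin n → Fin n, (S, a).2 = a := fun _ => rfl
          simp only [hred, hred2]
          rw [← Finset.sum_filter, Finset.sum_const, nsmul_eq_mul, card_valid_pi A S]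
          push_cast
          rw [mul_pow]
          ring
      _ ≤ tower γ (q+1) ^ A.card := by
          have hz : (0:ℝ) ≤ (A.card : ℝ) * (β * T) := by positivity
          have hsum : ∑ S : Finset (Fin n), ((A.card : ℝ) * (β * T)) ^ S.card
              = ((A.card : ℝ) * (β * T) + 1) ^ Fintype.card (Fin n) := by
            have hpa := Fintype.prod_add (fun _ : Fin n => (A.card : ℝ) * (β * T)) (fun _ => 1)
            rw [Finset.prod_const, Finset.card_univ] at hpa
            rw [hpa]
            refine Finset.sum_congr rfl ?_
            intro S _
            simp [Finset.prod_const]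
          rw [hsum]
          calc ((A.card : ℝ) * (β * T) + 1) ^ Fintype.card (Fin n)
              ≤ Real.exp ((A.card : ℝ) * (β * T)) ^ Fintype.card (Fin n) := by
                apply pow_le_pow_left₀ (by positivity)
                linarith [Real.add_one_le_exp ((A.card : ℝ) * (β * T))]
            _ = Real.exp ((Fintype.card (Fin n) : ℝ) * ((A.card : ℝ) * (β * T))) :=
                (Real.exp_nat_mul _ _).symm
            _ ≤ Real.exp ((γ * T) * A.card) := by
                apply Real.exp_le_exp.2
                simp only [Fintype.card_fin]
                have h1 : (A.card : ℝ) ≥ 0 := by positivity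
                nlinarith [mul_le_mul_of_nonneg_right hγ (mul_nonneg hT0 h1)]
            _ = Real.exp (γ * T) ^ A.card := by
                rw [mul_comm (γ * T) (A.card : ℝ)]; exact Real.exp_nat_mul _ _
            _ = tower γ (q+1) ^ A.card := rfl

variable (E : EdgeIdx n → Bool) (σ : Equiv.Perm (Fin n)) (v : Fin n)

def lvl (i : ℕ) : Finset (Fin n) × (Fin n → Fin n) := (sph E σ v (i+1), pF E σ v i)

def sList (j q : ℕ) : WL n := (List.range q).map (fun m => lvl E σ v (j + m))

lemma sList_mem : ∀ (q j : ℕ), sList E σ v j q ∈ wits q (sph E σ v j) := by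
  intro q
  induction q with
  | zero => intro j; simp [wits, sList]
  | succ q ih =>
    intro j
    have hsplit : sList E σ v j (q+1) = lvl E σ v j :: sList E σ v (j+1) q := by
      rw [sList, List.range_succ_eq_map, List.map_cons, List.map_map]
      refine congrArg₂ List.cons (by rw [Nat.add_zero]) ?_
      rw [sList]
      apply List.map_congr_left
      intro m _
      simp only [Function.comp_apply]
      congr 1
      omega
    rw [hsplit, wits]
    apply Finset.mem_biUnion.2
    refine ⟨lvl E σ v j, ?_, ?_⟩
    · apply Finset.mem_filter.2
      refine ⟨Finset.mem_univ _, ?_⟩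
      intro u
      by_cases hu : u ∈ sph E σ v (j+1)
      · simp only [lvl, hu, if_pos]
        exact (pF_spec hu).1
      · simp only [lvl, hu, if_neg, if_false]
        exact pF_id hu
    · exact Finset.mem_image_of_mem _ (ih (j+1))

lemma list_range_map_sum (r : ℕ) (g : ℕ → ℕ) :
    ((List.range r).map g).sum = ∑ i ∈ Finset.range r, g i := by
  induction r with
  | zero => simp
  | succ r ih => rw [List.range_succ, List.map_append, List.sum_append,
      Finset.sum_range_succ, ih]; simp

lemma ball_eq_biUnion (r : ℕ) :
    ballFinset E σ n r v = (Finset.range (r+1)).biUnion (sph E σ v) := by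
  ext u
  simp only [ballFinset, ballSet, Finset.mem_filter, Finset.mem_univ, true_and,
    Finset.mem_biUnion, Finset.mem_range, mem_sph, Set.mem_setOf_eq]
  constructor
  · rintro ⟨hr, hd⟩
    exact ⟨_, Nat.lt_succ_of_le hd, hr, rfl⟩
  · rintro ⟨ℓ, hℓ, hr, hd⟩
    exact ⟨hr, by omega⟩

lemma card_ball (r : ℕ) :
    ((ballFinset E σ n r v).card : ℕ) = 1 + sizeL (sList E σ v 0 r) := by
  rw [ball_eq_biUnion, Finset.card_biUnion]
  · rw [Finset.sum_range_succ']
    have h0 : (sph E σ v 0).card = 1 := by rw [sph_zero]; simp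
    have hs : sizeL (sList E σ v 0 r) = ∑ i ∈ Finset.range r, (sph E σ v (i+1)).card := by
      rw [sizeL, sList, List.map_map, list_range_map_sum]
      apply Finset.sum_congr rfl
      intro m _
      simp [lvl]
    rw [h0, hs]
    omega
  · intro ℓ _ ℓ' _ hne
    simp only [Finset.disjoint_left]
    intro u hu hu'
    rw [mem_sph] at hu hu'
    exact hne (hu.2 ▸ hu'.2)

/-- the edge set demanded by a witness list -/
def edgesOf (w : WL n) : Finset (EdgeIdx n) :=
  Finset.univ.filter (fun p => ∃ e ∈ w,
    (p.1.1 ∈ e.1 ∧ p.1.2 = e.2 p.1.1) ∨ (p.1.2 ∈ e.1 ∧ p.1.1 = e.2 p.1.2))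

lemma mem_sList_iff {j q : ℕ} {e} :
    e ∈ sList E σ v j q ↔ ∃ m < q, e = lvl E σ v (j + m) := by
  simp only [sList, List.mem_map, List.mem_range]
  constructor
  · rintro ⟨m, hm, rfl⟩; exact ⟨m, hm, rfl⟩
  · rintro ⟨m, hm, rfl⟩; exact ⟨m, hm, rfl⟩

lemma edges_true (r : ℕ) : ∀ p ∈ edgesOf (sList E σ v 0 r), E p = true := by
  intro p hp
  obtain ⟨e, he, hor⟩ := (Finset.mem_filter.1 hp).2
  obtain ⟨m, -, rfl⟩ := (mem_sList_iff E σ v).1 he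
  simp only [lvl, Nat.zero_add] at hor
  rcases hor with ⟨h1, h2⟩ | ⟨h1, h2⟩
  · exact adj_edge_true (pF_spec h1).2 p (Or.inr ⟨rfl, h2⟩)
  · exact adj_edge_true (pF_spec h1).2 p (Or.inl ⟨h2, rfl⟩)

def spair (x y : Fin n) : Option (EdgeIdx n) :=
  if h : x < y then some ⟨(x,y), h⟩ else if h : y < x then some ⟨(y,x), h⟩ else none

lemma spair_eq {x y : Fin n} {p : EdgeIdx n} (h : spair x y = some p) :
    (p.1.1 = x ∧ p.1.2 = y) ∨ (p.1.1 = y ∧ p.1.2 = x) := by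
  rw [spair] at h
  split at h
  · exact Or.inl (by injection h with h; subst h; exact ⟨rfl, rfl⟩)
  · split at h
    · exact Or.inr (by injection h with h; subst h; exact ⟨rfl, rfl⟩)
    · exact absurd h (by simp)

lemma sizeL_le_card_edges (r : ℕ) :
    sizeL (sList E σ v 0 r) ≤ (edgesOf (sList E σ v 0 r)).card := by
  classical
  set F := edgesOf (sList E σ v 0 r)
  have hsize : sizeL (sList E σ v 0 r) =
      ((Finset.range r).sigma (fun i => sph E σ v (i+1))).card := by
    rw [Finset.card_sigma, sizeL, sList, List.map_map, list_range_map_sum]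
    apply Finset.sum_congr rfl
    intro m _
    simp [lvl]
  rw [hsize]
  have hinj : ∀ a ∈ (Finset.range r).sigma (fun i => sph E σ v (i+1)),
      spair a.2 (pF E σ v a.1 a.2) ∈ F.image some := by
    intro a ha
    obtain ⟨ha1, ha2⟩ := Finset.mem_sigma.1 ha
    obtain ⟨hmem, hadj⟩ := pF_spec ha2
    have hne : pF E σ v a.1 a.2 ≠ a.2 := hadj.ne
    have hE : ∃ e ∈ sList E σ v 0 r, ∀ p : EdgeIdx n,
        ((p.1.1 = a.2 ∧ p.1.2 = pF E σ v a.1 a.2) ∨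
         (p.1.1 = pF E σ v a.1 a.2 ∧ p.1.2 = a.2)) →
        ((p.1.1 ∈ e.1 ∧ p.1.2 = e.2 p.1.1) ∨ (p.1.2 ∈ e.1 ∧ p.1.1 = e.2 p.1.2)) := by
      refine ⟨lvl E σ v a.1, (mem_sList_iff E σ v).2 ⟨a.1, Finset.mem_range.1 ha1, by
        rw [Nat.zero_add]⟩, ?_⟩
      intro p hp
      rcases hp with ⟨h1, h2⟩ | ⟨h1, h2⟩
      · exact Or.inl ⟨by rw [h1]; exact ha2, by rw [h2, h1]; exact rfl⟩
      · exact Or.inr ⟨by rw [h2]; exact ha2, by rw [h1, h2]; exact rfl⟩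
    rw [spair]
    rcases lt_trichotomy a.2 (pF E σ v a.1 a.2) with hlt | heq | hgt
    · rw [dif_pos hlt]
      apply Finset.mem_image_of_mem
      apply Finset.mem_filter.2
      refine ⟨Finset.mem_univ _, ?_⟩
      obtain ⟨e, he, hprop⟩ := hE
      exact ⟨e, he, hprop _ (Or.inl ⟨rfl, rfl⟩)⟩
    · exact absurd heq.symm hne
    · rw [dif_neg (asymm hgt), dif_pos hgt]
      apply Finset.mem_image_of_mem
      apply Finset.mem_filter.2
      refine ⟨Finset.mem_univ _, ?_⟩
      obtain ⟨e, he, hprop⟩ := hE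
      exact ⟨e, he, hprop _ (Or.inr ⟨rfl, rfl⟩)⟩
  have hInjOn : Set.InjOn (fun a : Σ _ : ℕ, Fin n => spair a.2 (pF E σ v a.1 a.2))
      ((Finset.range r).sigma (fun i => sph E σ v (i+1)) : Set (Σ _ : ℕ, Fin n)) := by
    intro a ha b hb hab
    simp only [Finset.coe_sigma, Set.mem_sigma_iff, Finset.mem_coe, Finset.mem_range] at ha hb
    obtain ⟨ha1, ha2⟩ := ha
    obtain ⟨hb1, hb2⟩ := hb
    have hpa := pF_spec ha2
    have hpb := pF_spec hb2
    -- dist facts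
    have hda : (graphAt E σ n).dist v a.2 = a.1 + 1 := (mem_sph.1 ha2).2
    have hdb : (graphAt E σ n).dist v b.2 = b.1 + 1 := (mem_sph.1 hb2).2
    have hdpa : (graphAt E σ n).dist v (pF E σ v a.1 a.2) = a.1 := (mem_sph.1 hpa.1).2
    have hdpb : (graphAt E σ n).dist v (pF E σ v b.1 b.2) = b.1 := (mem_sph.1 hpb.1).2
    -- from hab : spair .. = spair ..
    cases hsa : spair a.2 (pF E σ v a.1 a.2) with
    | none =>
      exfalso
      rw [spair] at hsa
      rcases lt_trichotomy a.2 (pF E σ v a.1 a.2) with h | h | h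
      · rw [dif_pos h] at hsa; exact absurd hsa (by simp)
      · exact hpa.2.ne h.symm
      · rw [dif_neg (asymm h), dif_pos h] at hsa; exact absurd hsa (by simp)
    | some p =>
      have hab' : spair a.2 (pF E σ v a.1 a.2) = spair b.2 (pF E σ v b.1 b.2) := hab
      have hsb : spair b.2 (pF E σ v b.1 b.2) = some p := by
        rw [← hab']; exact hsa
      have hca := spair_eq hsa
      have hcb := spair_eq hsb
      have key : (a.2 = b.2 ∧ pF E σ v a.1 a.2 = pF E σ v b.1 b.2) ∨
          (a.2 = pF E σ v b.1 b.2 ∧ pF E σ v a.1 a.2 = b.2) := by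
        rcases hca with ⟨h1, h2⟩ | ⟨h1, h2⟩ <;> rcases hcb with ⟨h3, h4⟩ | ⟨h3, h4⟩
        · exact Or.inl ⟨h1.symm.trans h3, h2.symm.trans h4⟩
        · exact Or.inr ⟨h1.symm.trans h3, h2.symm.trans h4⟩
        · exact Or.inr ⟨h2.symm.trans h4, h1.symm.trans h3⟩
        · exact Or.inl ⟨h2.symm.trans h4, h1.symm.trans h3⟩
      rcases key with ⟨h1, h2⟩ | ⟨h1, h2⟩
      · have : a.1 = b.1 := by
          have := hda
          rw [h1, hdb] at this
          omega
        exact Sigma.ext this (by rw [heq_iff_eq]; exact h1)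
      · exfalso
        have e1 : a.1 + 1 = b.1 := by rw [← hda, h1, hdpb]
        have e2 : b.1 + 1 = a.1 := by rw [← hdb, ← h2, hdpa]
        omega
  calc ((Finset.range r).sigma (fun i => sph E σ v (i+1))).card
      ≤ (F.image some).card := Finset.card_le_card_of_injOn _ hinj hInjOn
    _ = F.card := Finset.card_image_of_injective _ (Option.some_injective _)

lemma sum_prod_restrict (W : EdgeIdx n → Bool → ℝ) (hW1 : ∀ p, W p true + W p false = 1)
    (F : Finset (EdgeIdx n)) :
    ∑ E ∈ Finset.univ.filter (fun E : EdgeIdx n → Bool => ∀ p ∈ F, E p = true),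
      ∏ p, W p (E p) = ∏ p ∈ F, W p true := by
  classical
  rw [Finset.sum_filter]
  have hpt : ∀ E : EdgeIdx n → Bool,
      (if (∀ p ∈ F, E p = true) then ∏ p, W p (E p) else 0) =
      ∏ p, (if p ∈ F then (if E p then W p true else 0) else W p (E p)) := by
    intro E
    by_cases h : ∀ p ∈ F, E p = true
    · rw [if_pos h]
      apply Finset.prod_congr rfl
      intro p _
      by_cases hp : p ∈ F
      · simp [hp, h p hp]
      · simp [hp]
    · rw [if_neg h]
      push_neg at h
      obtain ⟨p0, hp0, hv⟩ := h
      symm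
      apply Finset.prod_eq_zero (Finset.mem_univ p0)
      simp only [Bool.not_eq_true] at hv
      simp [hp0, hv]
  rw [Finset.sum_congr rfl (fun E _ => hpt E)]
  rw [← Fintype.prod_sum (fun p b => if p ∈ F then (if b then W p true else 0) else W p b)]
  have : ∀ p : EdgeIdx n,
      (∑ b : Bool, if p ∈ F then (if b then W p true else 0) else W p b) =
      (if p ∈ F then W p true else 1) := by
    intro p
    rw [Fintype.sum_bool]
    by_cases hp : p ∈ F
    · simp [hp]
    · simp [hp, hW1 p]
  rw [Finset.prod_congr rfl (fun p _ => this p), Finset.prod_ite_mem, Finset.univ_inter]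

lemma main_fixed (σ : Equiv.Perm (Fin n)) (v : Fin n) (r : ℕ) (W : EdgeIdx n → Bool → ℝ)
    (hW0 : ∀ p b, 0 ≤ W p b) (hW1 : ∀ p, W p true + W p false = 1)
    (p0 : ℝ) (hp00 : 0 ≤ p0) (hp01 : p0 ≤ 1) (hWp : ∀ p, W p true ≤ p0)
    (t γ : ℝ) (ht : 0 ≤ t) (hγ : (n:ℝ) * (Real.exp t * p0) ≤ γ) :
    ∑ E : EdgeIdx n → Bool,
      (∏ p, W p (E p)) * Real.exp (t * ((ballFinset E σ n r v).card : ℝ))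
      ≤ Real.exp t * tower γ r := by
  classical
  have hmaps : ∀ E ∈ (Finset.univ : Finset (EdgeIdx n → Bool)),
      sList E σ v 0 r ∈ wits r ({v} : Finset (Fin n)) := by
    intro E _
    have := sList_mem E σ v r 0
    rwa [sph_zero] at this
  rw [← Finset.sum_fiberwise_of_maps_to hmaps
    (fun E => (∏ p, W p (E p)) * Real.exp (t * ((ballFinset E σ n r v).card : ℝ)))]
  have hfiber : ∀ w ∈ wits r ({v} : Finset (Fin n)),
      ∑ E ∈ Finset.univ.filter (fun E : EdgeIdx n → Bool => sList E σ v 0 r = w),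
        (∏ p, W p (E p)) * Real.exp (t * ((ballFinset E σ n r v).card : ℝ))
      ≤ Real.exp t * (Real.exp t * p0) ^ sizeL w := by
    intro w _
    have hcongr : ∀ E ∈ Finset.univ.filter
        (fun E : EdgeIdx n → Bool => sList E σ v 0 r = w),
        (∏ p, W p (E p)) * Real.exp (t * ((ballFinset E σ n r v).card : ℝ)) =
        (∏ p, W p (E p)) * Real.exp (t * (1 + sizeL w : ℕ)) := by
      intro E hE
      have hw := (Finset.mem_filter.1 hE).2
      rw [card_ball E σ v r, hw]
    rw [Finset.sum_congr rfl hcongr, ← Finset.sum_mul]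
    have hsub : Finset.univ.filter (fun E : EdgeIdx n → Bool => sList E σ v 0 r = w) ⊆
        Finset.univ.filter (fun E : EdgeIdx n → Bool => ∀ p ∈ edgesOf w, E p = true) := by
      intro E hE
      have hw := (Finset.mem_filter.1 hE).2
      apply Finset.mem_filter.2
      refine ⟨Finset.mem_univ _, ?_⟩
      rw [← hw]
      exact edges_true E σ v r
    have hprob : ∑ E ∈ Finset.univ.filter
        (fun E : EdgeIdx n → Bool => sList E σ v 0 r = w), ∏ p, W p (E p)
        ≤ p0 ^ sizeL w := by
      by_cases hne : (Finset.univ.filter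
          (fun E : EdgeIdx n → Bool => sList E σ v 0 r = w)).Nonempty
      · obtain ⟨E0, hE0⟩ := hne
        have hw0 := (Finset.mem_filter.1 hE0).2
        calc ∑ E ∈ Finset.univ.filter
              (fun E : EdgeIdx n → Bool => sList E σ v 0 r = w), ∏ p, W p (E p)
            ≤ ∑ E ∈ Finset.univ.filter
              (fun E : EdgeIdx n → Bool => ∀ p ∈ edgesOf w, E p = true), ∏ p, W p (E p) :=
              Finset.sum_le_sum_of_subset_of_nonneg hsub
                (fun E _ _ => Finset.prod_nonneg (fun p _ => hW0 p (E p)))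
          _ = ∏ p ∈ edgesOf w, W p true := sum_prod_restrict W hW1 _
          _ ≤ ∏ p ∈ edgesOf w, p0 := Finset.prod_le_prod
              (fun p _ => hW0 p true) (fun p _ => hWp p)
          _ = p0 ^ (edgesOf w).card := Finset.prod_const p0
          _ ≤ p0 ^ sizeL w := by
              apply pow_le_pow_of_le_one hp00 hp01
              rw [← hw0]
              exact sizeL_le_card_edges E0 σ v r
      · rw [Finset.not_nonempty_iff_eq_empty.1 hne, Finset.sum_empty]
        positivity
    calc (∑ E ∈ Finset.univ.filter
          (fun E : EdgeIdx n → Bool => sList E σ v 0 r = w), ∏ p, W p (E p)) *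
          Real.exp (t * (1 + sizeL w : ℕ))
        ≤ p0 ^ sizeL w * Real.exp (t * (1 + sizeL w : ℕ)) :=
          mul_le_mul_of_nonneg_right hprob (Real.exp_pos _).le
      _ = Real.exp t * (Real.exp t * p0) ^ sizeL w := by
          push_cast
          rw [mul_add, Real.exp_add, mul_one, mul_pow]
          rw [mul_comm t (sizeL w : ℝ), Real.exp_nat_mul]
          ring
  calc ∑ w ∈ wits r ({v} : Finset (Fin n)), ∑ E ∈ Finset.univ.filter
        (fun E : EdgeIdx n → Bool => sList E σ v 0 r = w),
        (∏ p, W p (E p)) * Real.exp (t * ((ballFinset E σ n r v).card : ℝ))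
      ≤ ∑ w ∈ wits r ({v} : Finset (Fin n)),
          Real.exp t * (Real.exp t * p0) ^ sizeL w := Finset.sum_le_sum hfiber
    _ = Real.exp t * ∑ w ∈ wits r ({v} : Finset (Fin n)), (Real.exp t * p0) ^ sizeL w := by
        rw [Finset.mul_sum]
    _ ≤ Real.exp t * tower γ r := by
        apply mul_le_mul_of_nonneg_left ?_ (Real.exp_pos t).le
        have := sum_wits_le (Real.exp t * p0) γ
          (by positivity) hγ r ({v} : Finset (Fin n))
        simpa using this

end Aux

noncomputable section Aux2
open scoped Classical
open Finset

variable {n : ℕ}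

lemma edgeP_bounds (k : ℕ) (a b : ℝ) (ha : 0 ≤ a) (hb : 0 ≤ b)
    (τ : Fin n → Fin k) (p : EdgeIdx n) :
    0 ≤ edgeP k a b τ p ∧ edgeP k a b τ p ≤ max a b / n := by
  have hn : 0 < n := Fin.pos p.1.1
  have hnR : (0:ℝ) < n := by exact_mod_cast hn
  rw [edgeP]
  split
  · exact ⟨by positivity, by gcongr; exact le_max_left a b⟩
  · exact ⟨by positivity, by gcongr; exact le_max_right a b⟩

lemma density_nonneg (k : ℕ) (a b : ℝ) (ha : 0 ≤ a) (hb : 0 ≤ b)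
    (hd : max a b ≤ (n:ℝ)) (c : Config n k) : 0 ≤ density k a b c := by
  rw [density]
  apply mul_nonneg (by positivity)
  apply Finset.prod_nonneg
  intro p _
  have hn : 0 < n := Fin.pos p.1.1
  have hnR : (0:ℝ) < n := by exact_mod_cast hn
  obtain ⟨h1, h2⟩ := edgeP_bounds k a b ha hb c.1 p
  have h3 : edgeP k a b c.1 p ≤ 1 :=
    h2.trans ((div_le_one hnR).2 hd)
  split
  · exact h1
  · linarith

lemma exp_moment (k : ℕ) (hk : 0 < k) (a b : ℝ) (ha : 0 ≤ a) (hb : 0 ≤ b)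
    (hd : max a b ≤ (n : ℝ)) (v : Fin n) (r : ℕ) (t : ℝ) (ht : 0 ≤ t) :
    ∑ c : Config n k, density k a b c *
      Real.exp (t * ((ballFinset c.2.1 c.2.2 n r v).card : ℝ))
    ≤ Real.exp t * tower (max a b * Real.exp t) r := by
  have hn : 0 < n := Fin.pos v
  have hnR : (0:ℝ) < n := by exact_mod_cast hn
  have hd0 : (0:ℝ) ≤ max a b := le_trans ha (le_max_left a b)
  set K := Real.exp t * tower (max a b * Real.exp t) r with hK
  have key : ∀ (τ : Fin n → Fin k) (σ : Equiv.Perm (Fin n)),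
      ∑ E : EdgeIdx n → Bool,
        (∏ p, (if E p then edgeP k a b τ p else 1 - edgeP k a b τ p)) *
          Real.exp (t * ((ballFinset E σ n r v).card : ℝ)) ≤ K := by
    intro τ σ
    have h1le : max a b / n ≤ 1 := (div_le_one hnR).2 hd
    refine main_fixed σ v r
      (fun p b' => if b' then edgeP k a b τ p else 1 - edgeP k a b τ p)
      ?_ ?_ (max a b / n) (by positivity) h1le ?_ t (max a b * Real.exp t) ht ?_
    · intro p b'
      obtain ⟨hh1, hh2⟩ := edgeP_bounds k a b ha hb τ p
      have hh3 : edgeP k a b τ p ≤ 1 := hh2.trans h1le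
      cases b' <;> simp <;> linarith
    · intro p; simp
    · intro p
      simp only [if_true]
      exact (edgeP_bounds k a b ha hb τ p).2
    · apply le_of_eq
      field_simp
  have expand : ∑ c : Config n k, density k a b c *
        Real.exp (t * ((ballFinset c.2.1 c.2.2 n r v).card : ℝ))
      = ((1:ℝ)/(k:ℝ)^n) * ((1:ℝ)/(n.factorial:ℝ)) *
        ∑ τ : Fin n → Fin k, ∑ σ : Equiv.Perm (Fin n), ∑ E : EdgeIdx n → Bool,
          (∏ p, (if E p then edgeP k a b τ p else 1 - edgeP k a b τ p)) *
            Real.exp (t * ((ballFinset E σ n r v).card : ℝ)) := by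
    rw [Fintype.sum_prod_type, Finset.mul_sum]
    apply Finset.sum_congr rfl
    intro τ _
    rw [Fintype.sum_prod_type, Finset.sum_comm, Finset.mul_sum]
    apply Finset.sum_congr rfl
    intro σ _
    rw [Finset.mul_sum]
    apply Finset.sum_congr rfl
    intro E _
    simp only [density]
    ring
  rw [expand]
  have hsum : ∑ τ : Fin n → Fin k, ∑ σ : Equiv.Perm (Fin n), ∑ E : EdgeIdx n → Bool,
      (∏ p, (if E p then edgeP k a b τ p else 1 - edgeP k a b τ p)) *
        Real.exp (t * ((ballFinset E σ n r v).card : ℝ))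
      ≤ ((k:ℝ)^n * (n.factorial : ℝ)) * K := by
    have hK0 : 0 ≤ K := mul_nonneg (Real.exp_pos t).le (tower_nonneg _ _)
    calc ∑ τ : Fin n → Fin k, ∑ σ : Equiv.Perm (Fin n), ∑ E : EdgeIdx n → Bool, _
        ≤ ∑ _τ : Fin n → Fin k, ∑ _σ : Equiv.Perm (Fin n), K :=
          Finset.sum_le_sum (fun τ _ => Finset.sum_le_sum (fun σ _ => key τ σ))
      _ = ((k:ℝ)^n * (n.factorial : ℝ)) * K := by
          rw [Finset.sum_const, Finset.sum_const, Finset.card_univ, Finset.card_univ,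
            Fintype.card_perm, Fintype.card_fun, Fintype.card_fin, Fintype.card_fin,
            smul_smul, nsmul_eq_mul]
          push_cast
          ring
  have hcst : (0:ℝ) ≤ ((1:ℝ)/(k:ℝ)^n) * ((1:ℝ)/(n.factorial:ℝ)) := by positivity
  calc ((1:ℝ)/(k:ℝ)^n) * ((1:ℝ)/(n.factorial:ℝ)) * ∑ τ : Fin n → Fin k, _
      ≤ ((1:ℝ)/(k:ℝ)^n) * ((1:ℝ)/(n.factorial:ℝ)) * (((k:ℝ)^n * (n.factorial : ℝ)) * K) :=
        mul_le_mul_of_nonneg_left hsum hcst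
    _ = K := by
        have hkR : (k:ℝ) ≠ 0 := by
          exact_mod_cast hk.ne'
        have hf : (n.factorial:ℝ) ≠ 0 := by
          exact_mod_cast n.factorial_ne_zero
        field_simp

lemma pow_le_factorial_mul_exp (t x : ℝ) (ht : 0 < t) (hx : 0 ≤ x) (m : ℕ) :
    x ^ m ≤ (m.factorial : ℝ) / t ^ m * Real.exp (t * x) := by
  have h1 : (t*x)^m / (m.factorial:ℝ) ≤ Real.exp (t*x) := by
    have hsum := Real.sum_le_exp_of_nonneg (mul_nonneg ht.le hx) (m+1)
    have hterm : (t*x)^m / (m.factorial:ℝ) ≤ ∑ i ∈ Finset.range (m+1), (t*x)^i / (i.factorial:ℝ) :=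
      Finset.single_le_sum (f := fun i => (t*x)^i / (i.factorial:ℝ))
        (fun i _ => by positivity) (Finset.self_mem_range_succ m)
    exact hterm.trans hsum
  have hfac : (0:ℝ) < (m.factorial:ℝ) := by exact_mod_cast m.factorial_pos
  have htm : (0:ℝ) < t ^ m := by positivity
  rw [mul_pow] at h1
  have h2 := mul_le_mul_of_nonneg_left h1 (le_of_lt (div_pos hfac htm))
  calc x ^ m = (m.factorial:ℝ)/t^m * ((t^m * x^m)/(m.factorial:ℝ)) := by
        field_simp
    _ ≤ (m.factorial:ℝ)/t^m * Real.exp (t*x) := h2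

end Aux2

open scoped ENNReal in
/-- **Uniform control of the exponential moments of ball sizes (Lemma 6).**
Let `G(N)` be the graph of `StSSBM(N,k,a,b)` (here `N = n+1` so that the distinguished
vertex `v N` exists for every `n`), fix `R ≥ 1` and constants `L, C > 0`.  Then
`limsup_{n→∞} Σ_{m=1}^∞ (2^m L^m C^m / (m−1)!) · E[|V_{2R}^n(v)|^m] < ∞`. -/
theorem ball_moments_bounded
    (k : ℕ) (hk : 0 < k) (a b : ℝ) (ha : 0 ≤ a) (hb : 0 ≤ b)
    (R : ℕ) (hR : 0 < R) (L C : ℝ) (hL : 0 < L) (hC : 0 < C)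
    (v : (N : ℕ) → Fin (N + 1)) :
    Filter.limsup
      (fun n : ℕ =>
        ∑' m : ℕ,
          ENNReal.ofReal ((2 * L * C) ^ (m + 1) / (Nat.factorial m : ℝ)) *
            ENNReal.ofReal
              (∑ c : Config (n + 1) k, density k a b c *
                ((ballFinset c.2.1 c.2.2 (n + 1) (2 * R) (v n)).card : ℝ) ^ (m + 1)))
      Filter.atTop < ⊤ := by
  set t : ℝ := 4 * L * C with htdef
  have ht : 0 < t := by positivity
  set K : ℝ := Real.exp t * tower (max a b * Real.exp t) (2 * R) with hKdef
  have hK0 : 0 ≤ K := mul_nonneg (Real.exp_pos t).le (tower_nonneg _ _)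
  have hsummable : Summable (fun m : ℕ => K * (((m:ℝ) + 1) * (1/2 : ℝ) ^ (m+1))) := by
    apply Summable.mul_left
    have hgeo : Summable (fun m : ℕ => ((m:ℝ)) ^ 1 * (1/2 : ℝ) ^ m) :=
      summable_pow_mul_geometric_of_norm_lt_one 1 (by rw [Real.norm_eq_abs]; rw [abs_of_pos]; norm_num; norm_num)
    have hgeo2 : Summable (fun m : ℕ => ((1:ℝ)/2) ^ m) :=
      summable_geometric_of_lt_one (by norm_num) (by norm_num)
    apply ((hgeo.mul_left (1/2 : ℝ)).add (hgeo2.mul_left (1/2 : ℝ))).congr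
    intro m
    push_cast
    ring
  have hM : (∑' m : ℕ, ENNReal.ofReal (K * (((m:ℝ) + 1) * (1/2 : ℝ) ^ (m+1)))) < ⊤ := by
    rw [← ENNReal.ofReal_tsum_of_nonneg (fun m => by positivity) hsummable]
    exact ENNReal.ofReal_lt_top
  refine lt_of_le_of_lt (Filter.limsup_le_of_le (by isBoundedDefault) ?_) hM
  have hev : ∀ᶠ (n : ℕ) in Filter.atTop, max a b ≤ (((n:ℕ) + 1 : ℕ) : ℝ) := by
    filter_upwards [Filter.eventually_ge_atTop ⌈max a b⌉₊] with n hn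
    calc max a b ≤ (⌈max a b⌉₊ : ℝ) := Nat.le_ceil _
      _ ≤ (n : ℝ) := by exact_mod_cast hn
      _ ≤ (((n:ℕ) + 1 : ℕ) : ℝ) := by push_cast; linarith
  filter_upwards [hev] with n hd
  apply ENNReal.tsum_le_tsum
  intro m
  have hA : (0:ℝ) ≤ (2 * L * C) ^ (m+1) / (m.factorial : ℝ) := by positivity
  have hB : ∑ c : Config (n + 1) k, density k a b c *
        ((ballFinset c.2.1 c.2.2 (n + 1) (2 * R) (v n)).card : ℝ) ^ (m + 1)
      ≤ ((m+1).factorial : ℝ) / t ^ (m+1) * K := by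
    calc ∑ c : Config (n + 1) k, density k a b c *
          ((ballFinset c.2.1 c.2.2 (n + 1) (2 * R) (v n)).card : ℝ) ^ (m + 1)
        ≤ ∑ c : Config (n + 1) k, density k a b c *
            (((m+1).factorial : ℝ) / t ^ (m+1) *
              Real.exp (t * ((ballFinset c.2.1 c.2.2 (n + 1) (2 * R) (v n)).card : ℝ))) := by
          apply Finset.sum_le_sum
          intro c _
          exact mul_le_mul_of_nonneg_left
            (pow_le_factorial_mul_exp t _ ht (Nat.cast_nonneg _) (m+1))
            (density_nonneg k a b ha hb hd c)
      _ = ((m+1).factorial : ℝ) / t ^ (m+1) * ∑ c : Config (n + 1) k, density k a b c *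
            Real.exp (t * ((ballFinset c.2.1 c.2.2 (n + 1) (2 * R) (v n)).card : ℝ)) := by
          rw [Finset.mul_sum]
          apply Finset.sum_congr rfl
          intro c _
          ring
      _ ≤ ((m+1).factorial : ℝ) / t ^ (m+1) * K := by
          exact mul_le_mul_of_nonneg_left
            (exp_moment k hk a b ha hb hd (v n) (2 * R) t ht.le) (by positivity)
  calc ENNReal.ofReal ((2 * L * C) ^ (m + 1) / (Nat.factorial m : ℝ)) *
        ENNReal.ofReal (∑ c : Config (n + 1) k, density k a b c *
          ((ballFinset c.2.1 c.2.2 (n + 1) (2 * R) (v n)).card : ℝ) ^ (m + 1))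
      ≤ ENNReal.ofReal ((2 * L * C) ^ (m + 1) / (Nat.factorial m : ℝ)) *
          ENNReal.ofReal (((m+1).factorial : ℝ) / t ^ (m+1) * K) :=
        mul_le_mul_right (ENNReal.ofReal_le_ofReal hB) _
    _ = ENNReal.ofReal ((2 * L * C) ^ (m + 1) / (Nat.factorial m : ℝ) *
          (((m+1).factorial : ℝ) / t ^ (m+1) * K)) := (ENNReal.ofReal_mul hA).symm
    _ = ENNReal.ofReal (K * (((m:ℝ) + 1) * (1/2 : ℝ) ^ (m+1))) := by
        congr 1
        have hfac : ((m.factorial : ℝ)) ≠ 0 := by exact_mod_cast m.factorial_ne_zero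
        have h2lc : (2 * L * C : ℝ) ≠ 0 := by positivity
        have hts : t ^ (m+1) = 2 ^ (m+1) * (2 * L * C) ^ (m+1) := by
          rw [← mul_pow]
          congr 1
          rw [htdef]
          ring
        rw [Nat.factorial_succ, hts]
        push_cast
        field_simp
        ring_nf
        rw [mul_assoc, ← mul_pow]
        norm_num
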